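/- arXiv:2311.18634 — 3 statements merged into one kernel-verified Lean document; each statement's English description precedes it below -/
import Mathlib

section
/- There exists a ℂ-linear map Φ : M_2(ℂ) → M_2(ℂ) mapping positive semidefinite matrices to positive semidefinite matrices such that Φ^4 maps every nonzero positive semidefinite 2×2 matrix to a positive definite matrix, but Φ^3 does not (i.e., Φ is primitive with primitivity index γ(M_2^+, Φ) = 4). -/
open Matrix
open scoped ComplexOrder

noncomputable def pack (t x y z : ℝ) : Matrix (Fin 2) (Fin 2) ℂ :=
  !![(↑(t+z) : ℂ), ↑x - ↑y*Complex.I; ↑x + ↑y*Complex.I, ↑(t-z)]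

lemma quad (t x y z : ℝ) (v : Fin 2 → ℂ) :
    dotProduct (star v) ((pack t x y z) *ᵥ v) =
      ((t+z)*((v 0).re^2+(v 0).im^2) + (t-z)*((v 1).re^2+(v 1).im^2)
        + 2*x*((v 0).re*(v 1).re + (v 0).im*(v 1).im)
        + 2*y*((v 0).re*(v 1).im - (v 0).im*(v 1).re) : ℝ) := by
  simp [pack, dotProduct, mulVec, Fin.sum_univ_two, Complex.ext_iff,
    Complex.add_re, Complex.mul_re, Complex.add_im, Complex.mul_im,
    ← Complex.ofReal_pow]
  constructor <;> ring

lemma pack_herm (t x y z : ℝ) : (pack t x y z).IsHermitian := by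
  ext i j
  fin_cases i <;> fin_cases j <;>
    simp [pack, Matrix.conjTranspose_apply, Complex.ext_iff]

lemma pack_psd {t x y z : ℝ} (ht : 0 ≤ t) (h : x^2+y^2+z^2 ≤ t^2) :
    (pack t x y z).PosSemidef := by
  refine PosSemidef.of_dotProduct_mulVec_nonneg (pack_herm t x y z) fun v => ?_
  rw [quad]
  set p := (v 0).re; set q := (v 0).im; set u := (v 1).re; set w := (v 1).im
  have key : (0:ℝ) ≤ (t+z)*(p^2+q^2) + (t-z)*(u^2+w^2)
      + 2*x*(p*u + q*w) + 2*y*(p*w - q*u) := by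
    rcases eq_or_lt_of_le ht with h0 | htpos
    · have hx : x = 0 := by nlinarith
      have hy : y = 0 := by nlinarith
      have hz : z = 0 := by nlinarith
      rw [hx, hy, hz, ← h0]
      ring_nf
      rfl
    · nlinarith [sq_nonneg ((t+z)*p + x*u + y*w), sq_nonneg ((t+z)*q + x*w - y*u),
        sq_nonneg ((t-z)*u + x*p - y*q), sq_nonneg ((t-z)*w + x*q + y*p),
        mul_nonneg (by nlinarith : (0:ℝ) ≤ t^2 - x^2 - y^2 - z^2)
          (by positivity : (0:ℝ) ≤ u^2+w^2),
        mul_nonneg (by nlinarith : (0:ℝ) ≤ t^2 - x^2 - y^2 - z^2)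
          (by positivity : (0:ℝ) ≤ p^2+q^2), htpos]
  exact_mod_cast key

lemma pack_pd {t x y z : ℝ} (ht : 0 < t) (h : x^2+y^2+z^2 < t^2) :
    (pack t x y z).PosDef := by
  refine PosDef.of_dotProduct_mulVec_pos (pack_herm t x y z) fun v hv => ?_
  rw [quad]
  set p := (v 0).re; set q := (v 0).im; set u := (v 1).re; set w := (v 1).im
  have hvnz : 0 < p^2+q^2+u^2+w^2 := by
    by_contra hc
    push_neg at hc
    refine hv (funext fun i => ?_)
    have hp : p = 0 := by nlinarith [sq_nonneg p, sq_nonneg q, sq_nonneg u, sq_nonneg w]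
    have hq : q = 0 := by nlinarith [sq_nonneg p, sq_nonneg q, sq_nonneg u, sq_nonneg w]
    have hu : u = 0 := by nlinarith [sq_nonneg p, sq_nonneg q, sq_nonneg u, sq_nonneg w]
    have hw : w = 0 := by nlinarith [sq_nonneg p, sq_nonneg q, sq_nonneg u, sq_nonneg w]
    fin_cases i
    · exact Complex.ext (by simpa using hp) (by simpa using hq)
    · exact Complex.ext (by simpa using hu) (by simpa using hw)
  have key : (0:ℝ) < (t+z)*(p^2+q^2) + (t-z)*(u^2+w^2)
      + 2*x*(p*u + q*w) + 2*y*(p*w - q*u) := by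
    nlinarith [sq_nonneg ((t+z)*p + x*u + y*w), sq_nonneg ((t+z)*q + x*w - y*u),
      sq_nonneg ((t-z)*u + x*p - y*q), sq_nonneg ((t-z)*w + x*q + y*p),
      mul_pos (by nlinarith : (0:ℝ) < t^2 - x^2 - y^2 - z^2) hvnz, ht]
  exact_mod_cast key

lemma unpack {X : Matrix (Fin 2) (Fin 2) ℂ} (hX : X.PosSemidef) :
    ∃ t x y z : ℝ, 0 ≤ t ∧ x^2+y^2+z^2 ≤ t^2 ∧ X = pack t x y z := by
  obtain ⟨herm, hQ⟩ := posSemidef_iff_dotProduct_mulVec.mp hX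
  have h00 : star (X 0 0) = X 0 0 := herm.apply 0 0
  have h11 : star (X 1 1) = X 1 1 := herm.apply 1 1
  have h10 : star (X 0 1) = X 1 0 := herm.apply 1 0
  have h00im : (X 0 0).im = 0 := by
    have h := congrArg Complex.im h00
    simp at h
    linarith
  have h11im : (X 1 1).im = 0 := by
    have h := congrArg Complex.im h11
    simp at h
    linarith
  obtain ⟨t, hta⟩ : ∃ t:ℝ, t = ((X 0 0).re + (X 1 1).re)/2 := ⟨_, rfl⟩
  obtain ⟨x, hxa⟩ : ∃ x:ℝ, x = (X 0 1).re := ⟨_, rfl⟩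
  obtain ⟨y, hya⟩ : ∃ y:ℝ, y = -(X 0 1).im := ⟨_, rfl⟩
  obtain ⟨z, hza⟩ : ∃ z:ℝ, z = ((X 0 0).re - (X 1 1).re)/2 := ⟨_, rfl⟩
  have hpack : X = pack t x y z := by
    ext i j
    fin_cases i <;> fin_cases j
    · exact Complex.ext (by simp [pack, hta, hza]; ring) (by simp [pack, h00im])
    · exact Complex.ext (by simp [pack, hxa]) (by simp [pack, hya])
    · show X 1 0 = _
      rw [← h10]
      exact Complex.ext (by simp [pack, hxa]) (by simp [pack, hya])
    · exact Complex.ext (by simp [pack, hta, hza]; ring) (by simp [pack, h11im])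
  have hQ' : ∀ v : Fin 2 → ℂ, (0:ℝ) ≤
      ((t+z)*((v 0).re^2+(v 0).im^2) + (t-z)*((v 1).re^2+(v 1).im^2)
        + 2*x*((v 0).re*(v 1).re + (v 0).im*(v 1).im)
        + 2*y*((v 0).re*(v 1).im - (v 0).im*(v 1).re)) := by
    intro v
    have h := hQ v
    rw [hpack, quad] at h
    exact_mod_cast h
  have ha : 0 ≤ t + z := by
    have h := hQ' ![1, 0]
    simp at h
    linarith
  have hb : 0 ≤ t - z := by
    have h := hQ' ![0, 1]
    simp at h
    linarith
  have h3 : 0 ≤ (t+z)*((t+z)*(t-z) - (x^2+y^2)) := by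
    have h := hQ' ![(↑x - ↑y*Complex.I), -↑(t+z)]
    simp at h
    nlinarith [h]
  refine ⟨t, x, y, z, by linarith, ?_, hpack⟩
  rcases eq_or_lt_of_le ha with h0 | hapos
  · obtain ⟨k, hk⟩ : ∃ k:ℝ, k = (x^2+y^2)/((t-z)+1) := ⟨_, rfl⟩
    have hD1 : (0:ℝ) < (t-z) + 1 := by linarith
    have h5 := hQ' ![(↑x - ↑y*Complex.I), -↑k]
    simp at h5
    have h5' : 0 ≤ ((t+z)*(x^2+y^2) + (t-z)*k^2 - 2*(x^2+y^2)*k) * ((t-z)+1)^2 :=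
      mul_nonneg (by nlinarith [h5]) (by positivity)
    rw [show ((t+z)*(x^2+y^2) + (t-z)*k^2 - 2*(x^2+y^2)*k) * ((t-z)+1)^2
        = (t+z)*(x^2+y^2)*((t-z)+1)^2 - (x^2+y^2)^2*((t-z)+2) from by
      rw [hk]; field_simp; ring] at h5'
    rw [← h0] at h5'
    have h6 : (x^2+y^2)^2 ≤ 0 := by nlinarith [h5', hb]
    have hnb : x^2+y^2 = 0 := le_antisymm (by nlinarith [h6]) (by positivity)
    nlinarith [hnb, h0, hb]
  · nlinarith [h3, hapos]

noncomputable def K00 : Matrix (Fin 2) (Fin 2) ℂ :=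
  !![(1/2 : ℂ), -315/1184 + (1801/4736)*Complex.I;
     -315/1184 - (1801/4736)*Complex.I, (1/2 : ℂ)]
noncomputable def K01 : Matrix (Fin 2) (Fin 2) ℂ :=
  !![-(3/8)*Complex.I, 81/1184 + (945/4736)*Complex.I;
     81/1184 - (945/4736)*Complex.I, (3/8)*Complex.I]
noncomputable def K10 : Matrix (Fin 2) (Fin 2) ℂ :=
  !![(3/8)*Complex.I, 81/1184 + (945/4736)*Complex.I;
     81/1184 - (945/4736)*Complex.I, -(3/8)*Complex.I]
noncomputable def K11 : Matrix (Fin 2) (Fin 2) ℂ :=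
  !![(1/2 : ℂ), 525/1184 + (649/4736)*Complex.I;
     525/1184 - (649/4736)*Complex.I, (1/2 : ℂ)]

noncomputable def phi : Module.End ℂ (Matrix (Fin 2) (Fin 2) ℂ) where
  toFun X := X 0 0 • K00 + X 0 1 • K01 + X 1 0 • K10 + X 1 1 • K11
  map_add' X Y := by
    simp only [Matrix.add_apply, add_smul]
    abel
  map_smul' c X := by
    simp only [Matrix.smul_apply, smul_eq_mul, RingHom.id_apply]
    rw [smul_add, smul_add, smul_add, smul_smul, smul_smul, smul_smul, smul_smul]

lemma phi_pack (t x y z : ℝ) : phi (pack t x y z) =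
    pack t ((81/592)*x - (105/148)*z + (105/592)*t)
           (-(945/2368)*x - (9/37)*z - (1225/2368)*t)
           (-(3/4)*y) := by
  show (pack t x y z) 0 0 • K00 + (pack t x y z) 0 1 • K01
      + (pack t x y z) 1 0 • K10 + (pack t x y z) 1 1 • K11 = _
  ext i j
  fin_cases i <;> fin_cases j <;>
    · simp [pack, K00, K01, K10, K11, Complex.ext_iff, Complex.add_re, Complex.add_im,
        Complex.mul_re, Complex.mul_im, ← Complex.ofReal_pow]
      first | (constructor <;> ring) | ring

lemma final_ineq (t x y z : ℝ) (ht : 0 < t) (h : x^2+y^2+z^2 ≤ t^2) :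
    ((-17831391375/122825015296)*t + (-7094009079/122825015296)*x + (22206555/207474688)*y + (4026292515/30706253824)*z)^2 + ((-293082294925/491300061184)*t + (36236632635/491300061184)*x + (3508677/829898752)*y + (13339114425/122825015296)*z)^2 + ((1723255275/3319595008)*t + (199858995/3319595008)*x + (893025/5607424)*y + (3508677/829898752)*z)^2 < t^2 := by
  have key : t^2 - (((-17831391375/122825015296)*t + (-7094009079/122825015296)*x + (22206555/207474688)*y + (4026292515/30706253824)*z)^2 + ((-293082294925/491300061184)*t + (36236632635/491300061184)*x + (3508677/829898752)*y + (13339114425/122825015296)*z)^2 + ((1723255275/3319595008)*t + (199858995/3319595008)*x + (893025/5607424)*y + (3508677/829898752)*z)^2)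
      = (37/200)*(t^2-x^2-y^2-z^2) + (1/20)*t^2
        + (522672955557273123959/4407884406855408025600)*((1)*t + (19219581958058409375/522672955557273123959)*x + (-284804044097139630000/522672955557273123959)*y + (359804927970206932500/522672955557273123959)*z)^2
        + (2362683054504364214463010801/13701557926160580580710809600)*((0)*t + (1)*x + (-18391245874956583258809375/2362683054504364214463010801)*y + (-202400360165707821441646875/9450732218017456857852043204)*z)^2
        + (6995426160966722932539215348310839/61936318663999205263619150341734400)*((0)*t + (0)*x + (1)*y + (1813691013749665579234169269312500/6995426160966722932539215348310839)*z)^2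
        + (1031194959331220942394996047721071569/11192681857546756692062744557297342400)*((0)*t + (0)*x + (0)*y + (1)*z)^2 := by ring
  nlinarith [key, sq_nonneg ((1)*t + (19219581958058409375/522672955557273123959)*x + (-284804044097139630000/522672955557273123959)*y + (359804927970206932500/522672955557273123959)*z), sq_nonneg ((0)*t + (1)*x + (-18391245874956583258809375/2362683054504364214463010801)*y + (-202400360165707821441646875/9450732218017456857852043204)*z), sq_nonneg ((0)*t + (0)*x + (1)*y + (1813691013749665579234169269312500/6995426160966722932539215348310839)*z), sq_nonneg ((0)*t + (0)*x + (0)*y + (1)*z),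
    mul_pos ht ht, h]

lemma phi4_pack (t x y z : ℝ) :
    phi (phi (phi (phi (pack t x y z)))) =
      pack t ((-17831391375/122825015296)*t + (-7094009079/122825015296)*x + (22206555/207474688)*y + (4026292515/30706253824)*z) ((-293082294925/491300061184)*t + (36236632635/491300061184)*x + (3508677/829898752)*y + (13339114425/122825015296)*z) ((1723255275/3319595008)*t + (199858995/3319595008)*x + (893025/5607424)*y + (3508677/829898752)*z) := by
  rw [phi_pack, phi_pack, phi_pack, phi_pack]
  congr 1 <;> ring


/-- There is a positive linear map on `M_2(ℂ)` which is primitive with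
primitivity index exactly `4`: `Φ^4` is strictly positive but `Φ^3` is not. -/
theorem exists_m2_primitive_index_eq_four :
    ∃ Φ : Module.End ℂ (Matrix (Fin 2) (Fin 2) ℂ),
      (∀ X : Matrix (Fin 2) (Fin 2) ℂ, X.PosSemidef → (Φ X).PosSemidef) ∧
      (∀ X : Matrix (Fin 2) (Fin 2) ℂ, X.PosSemidef → X ≠ 0 → ((Φ ^ 4) X).PosDef) ∧
      ¬ (∀ X : Matrix (Fin 2) (Fin 2) ℂ, X.PosSemidef → X ≠ 0 → ((Φ ^ 3) X).PosDef) := by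
  refine ⟨phi, ?_, ?_, ?_⟩
  · intro X hX
    obtain ⟨t, x, y, z, ht, h, hpack⟩ := unpack hX
    rw [hpack, phi_pack]
    exact pack_psd ht (by nlinarith [sq_nonneg (x - (3/5)*t)])
  · intro X hX hne
    obtain ⟨t, x, y, z, ht, h, hpack⟩ := unpack hX
    have htpos : 0 < t := by
      rcases eq_or_lt_of_le ht with h0 | hp
      · exfalso
        apply hne
        have hx : x = 0 := by nlinarith
        have hy : y = 0 := by nlinarith
        have hz : z = 0 := by nlinarith
        rw [hpack, ← h0, hx, hy, hz]
        ext i j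
        fin_cases i <;> fin_cases j <;> simp [pack]
      · exact hp
    have h4 : (phi^4) X = phi (phi (phi (phi X))) := by
      rw [pow_succ, Module.End.mul_apply, pow_succ, Module.End.mul_apply,
        pow_succ, Module.End.mul_apply, pow_one]
    rw [h4, hpack, phi4_pack]
    exact pack_pd htpos (final_ineq t x y z htpos h)
  · intro hall
    have hpsd : (pack 1 (3/5) (16/25) (-12/25)).PosSemidef :=
      pack_psd (by norm_num) (by norm_num)
    have hne : pack 1 (3/5) (16/25) (-12/25) ≠ 0 := by
      intro hc
      have h00 := congrFun (congrFun hc 0) 0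
      norm_num [pack] at h00
    have hpd := hall _ hpsd hne
    have h3 : (phi^3) (pack 1 (3/5) (16/25) (-12/25))
        = pack 1 (-3/37) (-808/925) (12/25) := by
      rw [pow_succ, Module.End.mul_apply, pow_succ, Module.End.mul_apply, pow_one]
      rw [phi_pack, phi_pack, phi_pack]
      congr 1 <;> norm_num
    rw [h3] at hpd
    have hv : (![((-3/37 : ℝ) : ℂ) - ((-808/925 : ℝ) : ℂ)*Complex.I,
        -((1 + 12/25 : ℝ) : ℂ)] : Fin 2 → ℂ) ≠ 0 := by
      intro hc
      have h1 := congrFun hc 1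
      norm_num [Complex.ext_iff] at h1
    have hq := hpd.dotProduct_mulVec_pos hv
    rw [quad] at hq
    norm_num [Complex.lt_def] at hq
end

section
/- Let Φ : M_2(ℂ) → M_2(ℂ) be a completely positive map, i.e., there exist finitely many matrices A_1, …, A_m ∈ M_2(ℂ) with Φ(X) = Σ_{i=1}^m A_i X A_i* for all X. Suppose there exists an integer k ≥ 1 such that Φ^k maps every nonzero positive semidefinite 2×2 matrix to a positive definite matrix (i.e., Φ is primitive). Then Φ^3 maps every nonzero positive semidefinite 2×2 matrix to a positive definite matrix. -/
open Matrix
open scoped ComplexOrder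

namespace CPaux

abbrev V := Fin 2 → ℂ
abbrev Mat := Matrix (Fin 2) (Fin 2) ℂ

noncomputable def ov (u : V) : Mat := vecMulVec u (star u)

noncomputable def dt (x y : V) : ℂ := x 0 * y 1 - x 1 * y 0

lemma ov_apply (u : V) (p q : Fin 2) : ov u p q = u p * (starRingEnd ℂ) (u q) := by
  simp [ov, vecMulVec_apply, Pi.star_apply, Complex.star_def]

lemma det_ov (u : V) : (ov u).det = 0 := by
  rw [Matrix.det_fin_two]
  simp only [ov_apply]
  ring

lemma sum_conj_mul_self_eq_zero {ι : Type*} {s : Finset ι} {f : ι → ℂ}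
    (h : ∑ i ∈ s, f i * (starRingEnd ℂ) (f i) = 0) : ∀ i ∈ s, f i = 0 := by
  have h' : ∑ i ∈ s, (Complex.normSq (f i) : ℂ) = 0 := by
    rw [← h]; exact Finset.sum_congr rfl fun i _ => (Complex.mul_conj (f i)).symm
  have h'' : ∑ i ∈ s, Complex.normSq (f i) = 0 := by
    have := h'
    rw [← Complex.ofReal_sum] at this
    exact_mod_cast this
  intro i hi
  have := (Finset.sum_eq_zero_iff_of_nonneg (fun j _ => Complex.normSq_nonneg (f j))).mp h'' i hi
  exact Complex.normSq_eq_zero.mp this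

lemma transform (B : Mat) (w : V) : B * ov w * Bᴴ = ov (B *ᵥ w) := by
  ext p q
  simp only [ov_apply, mul_apply, ov, vecMulVec_apply, mulVec, dotProduct,
    conjTranspose_apply, Fin.sum_univ_two, Pi.star_apply, Complex.star_def, map_add,
    _root_.map_mul]
  ring

lemma ov_smul (c : ℂ) (w : V) : ov (c • w) = (c * (starRingEnd ℂ) c) • ov w := by
  ext p q
  simp only [ov_apply, Pi.smul_apply, smul_eq_mul, Matrix.smul_apply, _root_.map_mul]
  ring

lemma ov_zero : ov (0 : V) = 0 := by
  ext p q; simp [ov_apply]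

lemma eq_zero_of_ov {u : V} (h : ov u = 0) : u = 0 := by
  funext p
  have h1 : u p * (starRingEnd ℂ) (u p) = 0 := by
    have := congrFun (congrFun h p) p
    rw [ov_apply] at this
    simpa using this
  rw [Complex.mul_conj] at h1
  exact Complex.normSq_eq_zero.mp (by exact_mod_cast h1)

lemma not_posdef_smul_ov (c : ℂ) (w : V) : ¬ (c • ov w).PosDef := by
  intro h
  have hd := h.det_pos
  have hz : (c • ov w).det = 0 := by
    rw [Matrix.det_smul, det_ov, mul_zero]
  rw [hz] at hd
  exact lt_irrefl 0 hd

lemma dep {x y : V} (hx : x ≠ 0) (h : dt x y = 0) : ∃ c : ℂ, y = c • x := by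
  rw [dt] at h
  by_cases h0 : x 0 = 0
  · have h1 : x 1 ≠ 0 := by
      intro h1; apply hx; funext p; fin_cases p <;> simp [h0, h1]
    refine ⟨y 1 / x 1, ?_⟩
    funext p; fin_cases p
    · have : y 0 = 0 := by
        have : x 1 * y 0 = 0 := by linear_combination y 1 * h0 - h
        exact (mul_eq_zero.mp this).resolve_left h1
      simp [this, h0, Pi.smul_apply]
    · simp only [Pi.smul_apply, smul_eq_mul]
      field_simp
      rfl
  · refine ⟨y 0 / x 0, ?_⟩
    funext p; fin_cases p
    · show y 0 = y 0 / x 0 * x 0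
      rw [div_mul_cancel₀ _ h0]
    · show y 1 = y 0 / x 0 * x 1
      rw [div_mul_eq_mul_div, eq_div_iff h0]
      linear_combination h

lemma parallel {m : ℕ} {w : V} {z : Fin m → V} (h : ov w = ∑ i, ov (z i)) :
    ∀ i, ∃ c : ℂ, z i = c • w := by
  have hentry : ∀ p q, w p * (starRingEnd ℂ) (w q) = ∑ i, z i p * (starRingEnd ℂ) (z i q) := by
    intro p q
    have := congrFun (congrFun h p) q
    simpa [ov_apply, Matrix.sum_apply] using this
  by_cases hw : w = 0
  · intro i
    refine ⟨0, ?_⟩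
    rw [zero_smul]
    funext p
    have h00 : ∑ i, z i p * (starRingEnd ℂ) (z i p) = 0 := by
      rw [← hentry p p, hw]; simp
    exact sum_conj_mul_self_eq_zero h00 i (Finset.mem_univ i)
  · intro i
    have key : ∑ j, (z j 0 * w 1 - z j 1 * w 0) * (starRingEnd ℂ) (z j 0 * w 1 - z j 1 * w 0) = 0 := by
      have expand : ∀ j : Fin m, (z j 0 * w 1 - z j 1 * w 0) * (starRingEnd ℂ) (z j 0 * w 1 - z j 1 * w 0)
          = z j 0 * (starRingEnd ℂ) (z j 0) * (w 1 * (starRingEnd ℂ) (w 1))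
            - z j 0 * (starRingEnd ℂ) (z j 1) * (w 1 * (starRingEnd ℂ) (w 0))
            - z j 1 * (starRingEnd ℂ) (z j 0) * (w 0 * (starRingEnd ℂ) (w 1))
            + z j 1 * (starRingEnd ℂ) (z j 1) * (w 0 * (starRingEnd ℂ) (w 0)) := by
        intro j
        simp only [map_sub, _root_.map_mul]
        ring
      rw [Finset.sum_congr rfl (fun j _ => expand j)]
      rw [Finset.sum_add_distrib, Finset.sum_sub_distrib, Finset.sum_sub_distrib,
        ← Finset.sum_mul, ← Finset.sum_mul, ← Finset.sum_mul, ← Finset.sum_mul,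
        ← hentry 0 0, ← hentry 0 1, ← hentry 1 0, ← hentry 1 1]
      ring
    have hd : z i 0 * w 1 - z i 1 * w 0 = 0 :=
      sum_conj_mul_self_eq_zero key i (Finset.mem_univ i)
    exact dep hw (by rw [dt]; linear_combination -hd)


lemma DEC {x y : V} (hd : dt x y ≠ 0) (z : V) : ∃ α β : ℂ, z = α • x + β • y := by
  refine ⟨(z 0 * y 1 - z 1 * y 0) / dt x y, (x 0 * z 1 - x 1 * z 0) / dt x y, ?_⟩
  funext p; fin_cases p
  · show z 0 = _ / dt x y * x 0 + _ / dt x y * y 0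
    rw [div_mul_eq_mul_div, div_mul_eq_mul_div, ← add_div, eq_div_iff hd, dt]
    ring
  · show z 1 = _ / dt x y * x 1 + _ / dt x y * y 1
    rw [div_mul_eq_mul_div, div_mul_eq_mul_div, ← add_div, eq_div_iff hd, dt]
    ring

lemma UNIQ {x y : V} (hd : dt x y ≠ 0) {α β γ δ : ℂ}
    (h : α • x + β • y = γ • x + δ • y) : α = γ ∧ β = δ := by
  have e0 : α * x 0 + β * y 0 = γ * x 0 + δ * y 0 := congrFun h 0
  have e1 : α * x 1 + β * y 1 = γ * x 1 + δ * y 1 := congrFun h 1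
  rw [dt] at hd
  constructor
  · have : (α - γ) * (x 0 * y 1 - x 1 * y 0) = 0 := by
      linear_combination y 1 * e0 - y 0 * e1
    have := (mul_eq_zero.mp this).resolve_right hd
    exact sub_eq_zero.mp this
  · have : (β - δ) * (x 0 * y 1 - x 1 * y 0) = 0 := by
      linear_combination x 0 * e1 - x 1 * e0
    have := (mul_eq_zero.mp this).resolve_right hd
    exact sub_eq_zero.mp this

lemma KILL {B : Mat} {x y : V} (hd : dt x y ≠ 0) (hx : B *ᵥ x = 0) (hy : B *ᵥ y = 0) :
    B = 0 := by
  rw [dt] at hd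
  ext p q
  have e1 : B p 0 * x 0 + B p 1 * x 1 = 0 := by
    have := congrFun hx p; simpa [mulVec, dotProduct, Fin.sum_univ_two] using this
  have e2 : B p 0 * y 0 + B p 1 * y 1 = 0 := by
    have := congrFun hy p; simpa [mulVec, dotProduct, Fin.sum_univ_two] using this
  fin_cases q
  · show B p 0 = 0
    have : B p 0 * (x 0 * y 1 - x 1 * y 0) = 0 := by linear_combination y 1 * e1 - x 1 * e2
    exact (mul_eq_zero.mp this).resolve_right hd
  · show B p 1 = 0
    have : B p 1 * (x 0 * y 1 - x 1 * y 0) = 0 := by linear_combination x 0 * e2 - y 0 * e1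
    exact (mul_eq_zero.mp this).resolve_right hd

lemma sum_mulVec {k : ℕ} (M : Fin k → Mat) (y : V) : (∑ i, M i) *ᵥ y = ∑ i, M i *ᵥ y := by
  funext p
  simp only [mulVec, dotProduct, Matrix.sum_apply, Finset.sum_apply, Finset.sum_mul]
  rw [Finset.sum_comm]

lemma dotProduct_sum' {k : ℕ} (y : V) (v : Fin k → V) :
    y ⬝ᵥ (∑ i, v i) = ∑ i, y ⬝ᵥ v i := by
  simp only [dotProduct, Finset.sum_apply, Finset.mul_sum]
  rw [Finset.sum_comm]

section Phi

variable (Φ : Module.End ℂ Mat) {m : ℕ} (A : Fin m → Mat)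
variable (hΦ : ∀ X : Mat, Φ X = ∑ i, A i * X * (A i)ᴴ)

include hΦ

lemma psd_step {Z : Mat} (hZ : Z.PosSemidef) : (Φ Z).PosSemidef := by
  rw [hΦ]
  exact Finset.sum_induction _ _ (fun a b ha hb => ha.add hb) PosSemidef.zero
    (fun i _ => hZ.mul_mul_conjTranspose_same (A i))

lemma Phi_ov (w : V) : Φ (ov w) = ∑ i, ov (A i *ᵥ w) := by
  rw [hΦ]
  exact Finset.sum_congr rfl fun i _ => transform (A i) w

lemma iter_ov (v : ℕ → V) (hv : ∀ j, ∀ i, ∃ c : ℂ, A i *ᵥ v j = c • v (j + 1)) :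
    ∀ N, ∃ c : ℂ, (Φ ^ N) (ov (v 0)) = c • ov (v N) := by
  intro N
  induction N with
  | zero => exact ⟨1, by rw [pow_zero, Module.End.one_apply, one_smul]⟩
  | succ N ih =>
    obtain ⟨c, hc⟩ := ih
    choose g hg using hv N
    refine ⟨c * ∑ i, g i * (starRingEnd ℂ) (g i), ?_⟩
    rw [pow_succ', Module.End.mul_apply, hc, _root_.map_smul, Phi_ov Φ A hΦ]
    rw [Finset.sum_congr rfl (fun i _ => by rw [hg i, ov_smul])]
    rw [← Finset.sum_smul, smul_smul, Finset.mul_sum]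

lemma form_expand (Z : Mat) (y : V) :
    star y ⬝ᵥ ((Φ Z) *ᵥ y) = ∑ i, star ((A i)ᴴ *ᵥ y) ⬝ᵥ (Z *ᵥ ((A i)ᴴ *ᵥ y)) := by
  rw [hΦ, sum_mulVec, dotProduct_sum']
  refine Finset.sum_congr rfl fun i _ => ?_
  rw [← Matrix.mulVec_mulVec, ← Matrix.mulVec_mulVec, Matrix.dotProduct_mulVec]
  congr 1
  rw [← conjTranspose_conjTranspose (A i), ← Matrix.star_mulVec, conjTranspose_conjTranspose]

lemma posdef_map {k : ℕ} (hk1 : 1 ≤ k)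
    (hk : ∀ X : Mat, X.PosSemidef → X ≠ 0 → ((Φ ^ k) X).PosDef)
    {Y : Mat} (hY : Y.PosDef) : (Φ Y).PosDef := by
  have hpsd : (Φ Y).PosSemidef := psd_step Φ A hΦ hY.posSemidef
  by_contra hnd
  rw [Matrix.posDef_iff_dotProduct_mulVec] at hnd
  push_neg at hnd
  obtain ⟨y, hy0, hyform⟩ := hnd hpsd.isHermitian
  have hform0 : star y ⬝ᵥ ((Φ Y) *ᵥ y) = 0 :=
    ((hpsd.dotProduct_mulVec_nonneg y).lt_or_eq.resolve_left hyform).symm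
  have hz : ∀ i, (A i)ᴴ *ᵥ y = 0 := by
    rw [form_expand Φ A hΦ] at hform0
    intro i
    by_contra hne
    have hpos : 0 < star ((A i)ᴴ *ᵥ y) ⬝ᵥ (Y *ᵥ ((A i)ᴴ *ᵥ y)) := hY.dotProduct_mulVec_pos hne
    have hnonneg : ∀ j ∈ Finset.univ, (0:ℂ) ≤ star ((A j)ᴴ *ᵥ y) ⬝ᵥ (Y *ᵥ ((A j)ᴴ *ᵥ y)) :=
      fun j _ => hY.posSemidef.dotProduct_mulVec_nonneg _
    exact (Finset.sum_pos' hnonneg ⟨i, Finset.mem_univ i, hpos⟩).ne' hform0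
  have h1 : ((Φ ^ k) (1 : Mat)).PosDef := hk 1 PosSemidef.one one_ne_zero
  have hkk : (Φ ^ k) (1 : Mat) = Φ ((Φ ^ (k - 1)) 1) := by
    conv_lhs => rw [show k = (k - 1) + 1 by omega]
    rw [pow_succ', Module.End.mul_apply]
  have hcon := h1.dotProduct_mulVec_pos hy0
  rw [hkk, form_expand Φ A hΦ] at hcon
  simp only [hz, star_zero, Matrix.mulVec_zero, dotProduct_zero, Finset.sum_const_zero] at hcon
  exact lt_irrefl 0 hcon

end Phi

lemma per {m : ℕ} (A : Fin m → Mat) (u : ℕ → V) (a b : ℕ) (hab : a < b) (hb : b ≤ 3)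
    (hchain : ∀ j, j ≤ 2 → ∀ i, ∃ c : ℂ, A i *ᵥ u j = c • u (j + 1))
    (c₀ : ℂ) (hper : u b = c₀ • u a) :
    ∃ v : ℕ → V, v 0 = u a ∧ ∀ j i, ∃ c : ℂ, A i *ᵥ v j = c • v (j + 1) := by
  set p := b - a with hp
  have hp0 : 0 < p := by omega
  refine ⟨fun j => u (a + j % p), by simp, ?_⟩
  intro j i
  have hr : j % p < p := Nat.mod_lt _ hp0
  by_cases hcase : j % p + 1 < p
  · have h1 : (j + 1) % p = j % p + 1 := by
      rw [Nat.add_mod, Nat.mod_eq_of_lt (show 1 < p by omega), Nat.mod_eq_of_lt hcase]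
    obtain ⟨c, hc⟩ := hchain (a + j % p) (by omega) i
    refine ⟨c, ?_⟩
    show A i *ᵥ u (a + j % p) = c • u (a + (j + 1) % p)
    rw [h1, ← Nat.add_assoc]
    exact hc
  · have hpe : j % p + 1 = p := by omega
    have h1 : (j + 1) % p = 0 := by
      have hd := Nat.div_add_mod j p
      have hdvd : p ∣ (j + 1) := ⟨j / p + 1, by rw [Nat.mul_add, Nat.mul_one]; omega⟩
      exact Nat.mod_eq_zero_of_dvd hdvd
    obtain ⟨c, hc⟩ := hchain (a + j % p) (by omega) i
    refine ⟨c * c₀, ?_⟩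
    show A i *ᵥ u (a + j % p) = (c * c₀) • u (a + (j + 1) % p)
    rw [h1, Nat.add_zero]
    have e : a + j % p + 1 = b := by omega
    rw [e] at hc
    rw [hc, hper, smul_smul]

lemma allA {m : ℕ} (A : Fin m → Mat) {u0 u1 u2 u3 : V}
    (h01 : dt u0 u1 ≠ 0) (h02 : dt u0 u2 ≠ 0) (h12 : dt u1 u2 ≠ 0)
    (h13 : dt u1 u3 ≠ 0) (h23 : dt u2 u3 ≠ 0)
    (hp : ∀ i, ∃ c : ℂ, A i *ᵥ u0 = c • u1)
    (hq : ∀ i, ∃ c : ℂ, A i *ᵥ u1 = c • u2)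
    (hr : ∀ i, ∃ c : ℂ, A i *ᵥ u2 = c • u3)
    (hnz : ¬ ∀ i, A i *ᵥ u0 = 0) :
    ∃ (M : Mat) (a : Fin m → ℂ), ∀ i, A i = a i • M := by
  choose p hp' using hp
  choose q hq' using hq
  choose r hr' using hr
  obtain ⟨α, β, hu2⟩ := DEC h01 u2
  have hα : α ≠ 0 := by
    rintro rfl
    apply h12
    rw [hu2, dt]
    simp only [Pi.add_apply, Pi.smul_apply, smul_eq_mul, zero_mul, zero_add]
    ring
  have hβ : β ≠ 0 := by
    rintro rfl
    apply h02
    rw [hu2, dt]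
    simp only [Pi.add_apply, Pi.smul_apply, smul_eq_mul, zero_mul, add_zero]
    ring
  obtain ⟨s, t, hu3⟩ := DEC h12 u3
  have hs : s ≠ 0 := by
    rintro rfl
    apply h23
    rw [hu3, dt]
    simp only [Pi.add_apply, Pi.smul_apply, smul_eq_mul, zero_mul, zero_add]
    ring
  have ht : t ≠ 0 := by
    rintro rfl
    apply h13
    rw [hu3, dt]
    simp only [Pi.add_apply, Pi.smul_apply, smul_eq_mul, zero_mul, add_zero]
    ring
  have hrel : ∀ i, α * p i = r i * s ∧ β * q i = r i * t := by
    intro i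
    have h1 : A i *ᵥ u2 = (α * p i) • u1 + (β * q i) • u2 := by
      conv_lhs => rw [hu2]
      rw [mulVec_add, mulVec_smul, mulVec_smul, hp' i, hq' i, smul_smul, smul_smul]
    have h2 : A i *ᵥ u2 = (r i * s) • u1 + (r i * t) • u2 := by
      rw [hr' i, hu3, smul_add, smul_smul, smul_smul]
    exact UNIQ h12 (h1.symm.trans h2)
  push_neg at hnz
  obtain ⟨i₀, hi₀⟩ := hnz
  have hpi₀ : p i₀ ≠ 0 := by
    rintro h
    apply hi₀
    rw [hp' i₀, h, zero_smul]
  refine ⟨A i₀, fun i => p i / p i₀, fun i => ?_⟩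
  have hqq : q i * p i₀ = q i₀ * p i := by
    obtain ⟨ha1, hb1⟩ := hrel i
    obtain ⟨ha2, hb2⟩ := hrel i₀
    have key : α * (β * (q i * p i₀ - q i₀ * p i)) = 0 := by
      linear_combination (α * p i₀) * hb1 + (r i * t) * ha2 - (α * p i) * hb2 - (r i₀ * t) * ha1
    have k1 := (mul_eq_zero.mp key).resolve_left hα
    have k2 := (mul_eq_zero.mp k1).resolve_left hβ
    linear_combination k2
  have k0 : (A i - (p i / p i₀) • A i₀) *ᵥ u0 = 0 := by
    rw [sub_mulVec, smul_mulVec, hp' i, hp' i₀, smul_smul,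
      div_mul_cancel₀ _ hpi₀, sub_self]
  have k1 : (A i - (p i / p i₀) • A i₀) *ᵥ u1 = 0 := by
    rw [sub_mulVec, smul_mulVec, hq' i, hq' i₀, smul_smul]
    have : q i = p i / p i₀ * q i₀ := by
      rw [div_mul_eq_mul_div, eq_div_iff hpi₀]
      linear_combination hqq
    rw [← this, sub_self]
  exact sub_eq_zero.mp (KILL h01 k0 k1)

lemma rank_one {X : Mat} (hX : X.PosSemidef) (hnd : ¬ X.PosDef) : ∃ u : V, X = ov u := by
  have hdet : X.det = 0 := by
    by_contra hd
    apply hnd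
    refine Matrix.PosDef.of_dotProduct_mulVec_pos hX.isHermitian fun x hx => ?_
    rcases (hX.dotProduct_mulVec_nonneg x).lt_or_eq with h | h
    · exact h
    · exact absurd (Matrix.exists_mulVec_eq_zero_iff.mp
        ⟨x, hx, (hX.dotProduct_mulVec_zero_iff x).mp h.symm⟩) hd
  have hba : X 1 0 = (starRingEnd ℂ) (X 0 1) := by
    conv_lhs => rw [← hX.isHermitian.eq]
    rw [conjTranspose_apply]
    rfl
  have h00 : (0:ℂ) ≤ X 0 0 := by
    simpa [dotProduct, mulVec, Fin.sum_univ_two] using hX.dotProduct_mulVec_nonneg ![1, 0]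
  have h11 : (0:ℂ) ≤ X 1 1 := by
    simpa [dotProduct, mulVec, Fin.sum_univ_two] using hX.dotProduct_mulVec_nonneg ![0, 1]
  have hdet2 : X 0 0 * X 1 1 - X 0 1 * X 1 0 = 0 := by
    rw [← Matrix.det_fin_two]; exact hdet
  rw [Complex.le_def] at h00 h11
  have him00 : (X 0 0).im = 0 := h00.2.symm
  have hre00 : 0 ≤ (X 0 0).re := by simpa using h00.1
  have him11 : (X 1 1).im = 0 := h11.2.symm
  have hre11 : 0 ≤ (X 1 1).re := by simpa using h11.1
  by_cases ha : X 0 0 = 0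
  · have hb : X 0 1 = 0 := by
      have e : X 0 1 * (starRingEnd ℂ) (X 0 1) = 0 := by
        rw [← hba]
        linear_combination X 1 1 * ha - hdet2
      rw [Complex.mul_conj] at e
      exact_mod_cast Complex.normSq_eq_zero.mp (by exact_mod_cast e)
    have hdC : X 1 1 = ((X 1 1).re : ℂ) := (Complex.ext (by simp) (by simp [him11])).symm
    refine ⟨![0, (Real.sqrt (X 1 1).re : ℂ)], ?_⟩
    ext p q
    rw [ov_apply]
    fin_cases p <;> fin_cases q <;>
      simp [ha, hb, hba, Complex.conj_ofReal]
    rw [hdC]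
    norm_cast
    rw [Real.mul_self_sqrt hre11]
  · set ar := (X 0 0).re with har_def
    have har : (0:ℝ) < ar := lt_of_le_of_ne hre00 (by
      intro h
      exact ha (Complex.ext h.symm him00))
    have haC : X 0 0 = (ar : ℂ) := (Complex.ext (by simp [har_def]) (by simp [him00])).symm
    have hsne : ((Real.sqrt ar : ℝ) : ℂ) ≠ 0 := by
      rw [Complex.ofReal_ne_zero]
      exact (Real.sqrt_pos.mpr har).ne'
    have hsq : ((Real.sqrt ar : ℝ) : ℂ) * ((Real.sqrt ar : ℝ) : ℂ) = (ar : ℂ) := by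
      rw [← Complex.ofReal_mul, Real.mul_self_sqrt har.le]
    refine ⟨![((Real.sqrt ar : ℝ) : ℂ), (starRingEnd ℂ) (X 0 1) / ((Real.sqrt ar : ℝ) : ℂ)], ?_⟩
    ext p q
    rw [ov_apply]
    fin_cases p <;> fin_cases q
    · simpa [Complex.conj_ofReal, hsq] using haC
    · simp [map_div₀, Complex.conj_ofReal]
      rw [mul_div_cancel₀ _ hsne]
    · simp [map_div₀, Complex.conj_ofReal]
      rw [div_mul_cancel₀ _ hsne]
      exact hba
    · simp [map_div₀, Complex.conj_ofReal]
      rw [div_mul_div_comm, hsq, eq_div_iff (by exact_mod_cast har.ne')]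
      rw [hba] at hdet2
      linear_combination hdet2 - X 1 1 * haC

end CPaux

open CPaux

/-- A primitive completely positive map on `M_2(ℂ)` (given by a Kraus
representation `Φ(X) = Σ_i A_i X A_i*`) has primitivity index at most `3`. -/
theorem cp_primitivity_index_le_three
    (Φ : Module.End ℂ (Matrix (Fin 2) (Fin 2) ℂ))
    (m : ℕ) (A : Fin m → Matrix (Fin 2) (Fin 2) ℂ)
    (hΦ : ∀ X : Matrix (Fin 2) (Fin 2) ℂ, Φ X = ∑ i, A i * X * (A i)ᴴ)
    (hprim : ∃ k : ℕ, 1 ≤ k ∧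
      ∀ X : Matrix (Fin 2) (Fin 2) ℂ, X.PosSemidef → X ≠ 0 → ((Φ ^ k) X).PosDef) :
    ∀ X : Matrix (Fin 2) (Fin 2) ℂ, X.PosSemidef → X ≠ 0 → ((Φ ^ 3) X).PosDef := by
  classical
  intro X hX hX0
  by_contra h3
  obtain ⟨k, hk1, hk⟩ := hprim
  have pdstep : ∀ {Y : Mat}, Y.PosDef → (Φ Y).PosDef :=
    fun hY => posdef_map Φ A hΦ hk1 hk hY
  have h3' : (Φ ^ 3) X = Φ (Φ (Φ X)) := by
    rw [pow_three, Module.End.mul_apply, Module.End.mul_apply]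
  have hnd0 : ¬ X.PosDef := fun h => h3 (h3' ▸ pdstep (pdstep (pdstep h)))
  obtain ⟨u0, hu0⟩ := rank_one hX hnd0
  have hpsd1 : (Φ X).PosSemidef := psd_step Φ A hΦ hX
  have hnd1 : ¬ (Φ X).PosDef := fun h => h3 (h3' ▸ pdstep (pdstep h))
  obtain ⟨u1, hu1⟩ := rank_one hpsd1 hnd1
  have hpsd2 : (Φ (Φ X)).PosSemidef := psd_step Φ A hΦ hpsd1
  have hnd2 : ¬ (Φ (Φ X)).PosDef := fun h => h3 (h3' ▸ pdstep h)
  obtain ⟨u2, hu2⟩ := rank_one hpsd2 hnd2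
  have hpsd3 : (Φ (Φ (Φ X))).PosSemidef := psd_step Φ A hΦ hpsd2
  have hnd3 : ¬ (Φ (Φ (Φ X))).PosDef := h3' ▸ h3
  obtain ⟨u3, hu3⟩ := rank_one hpsd3 hnd3
  have hc0 : ∀ i, ∃ c : ℂ, A i *ᵥ u0 = c • u1 := by
    refine parallel ?_
    rw [← hu1]
    conv_lhs => rw [hu0]
    rw [Phi_ov Φ A hΦ]
  have hc1 : ∀ i, ∃ c : ℂ, A i *ᵥ u1 = c • u2 := by
    refine parallel ?_
    rw [← hu2]
    conv_lhs => rw [hu1]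
    rw [Phi_ov Φ A hΦ]
  have hc2 : ∀ i, ∃ c : ℂ, A i *ᵥ u2 = c • u3 := by
    refine parallel ?_
    rw [← hu3]
    conv_lhs => rw [hu2]
    rw [Phi_ov Φ A hΦ]
  have hu0ne : u0 ≠ 0 := fun h => hX0 (by rw [hu0, h, ov_zero])
  set u : ℕ → V := fun j => if j = 0 then u0 else if j = 1 then u1 else if j = 2 then u2 else u3
    with hu
  have hU0 : u 0 = u0 := by simp [hu]
  have hU1 : u 1 = u1 := by simp [hu]
  have hU2 : u 2 = u2 := by simp [hu]
  have hU3 : u 3 = u3 := by simp [hu]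
  have hchain : ∀ j, j ≤ 2 → ∀ i, ∃ c : ℂ, A i *ᵥ u j = c • u (j + 1) := by
    intro j hj i
    interval_cases j
    · rw [hU0, show (0:ℕ)+1 = 1 from rfl, hU1]; exact hc0 i
    · rw [hU1, show (1:ℕ)+1 = 2 from rfl, hU2]; exact hc1 i
    · rw [hU2, show (2:ℕ)+1 = 3 from rfl, hU3]; exact hc2 i
  have hYa : ∀ a, a ≤ 3 → (Φ ^ a) X = ov (u a) := by
    intro a ha
    interval_cases a
    · rw [hU0, pow_zero, Module.End.one_apply]; exact hu0
    · rw [hU1, pow_one]; exact hu1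
    · rw [hU2, sq, Module.End.mul_apply]; exact hu2
    · rw [hU3, h3']; exact hu3
  rcases le_or_gt k 3 with hk3 | hk4
  · have hpd := hk X hX hX0
    rw [hYa k hk3, ← one_smul ℂ (ov (u k))] at hpd
    exact not_posdef_smul_ov 1 (u k) hpd
  · have hfin : ∀ (a : ℕ), a ≤ 3 →
        (∃ v : ℕ → V, v 0 = u a ∧ ∀ j i, ∃ c : ℂ, A i *ᵥ v j = c • v (j + 1)) → False := by
      rintro a ha ⟨v, hv0, hv⟩
      obtain ⟨c, hcc⟩ := iter_ov Φ A hΦ v hv (k - a)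
      rw [hv0, ← hYa a ha] at hcc
      have hsplit : (Φ ^ k) X = (Φ ^ (k - a)) ((Φ ^ a) X) := by
        rw [← Module.End.mul_apply, ← pow_add, Nat.sub_add_cancel (by omega : a ≤ k)]
      have hpd := hk X hX hX0
      rw [hsplit, hcc] at hpd
      exact not_posdef_smul_ov _ _ hpd
    by_cases e1 : u 1 = 0
    · exact hfin 0 (by omega) (per A u 0 1 (by omega) (by omega) hchain 0
        (by rw [e1, zero_smul]))
    by_cases e2 : u 2 = 0
    · exact hfin 1 (by omega) (per A u 1 2 (by omega) (by omega) hchain 0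
        (by rw [e2, zero_smul]))
    by_cases e3 : u 3 = 0
    · exact hfin 2 (by omega) (per A u 2 3 (by omega) (by omega) hchain 0
        (by rw [e3, zero_smul]))
    have hu0ne' : u 0 ≠ 0 := by rwa [hU0]
    by_cases d01 : dt (u 0) (u 1) = 0
    · obtain ⟨c₀, hc₀⟩ := dep hu0ne' d01
      exact hfin 0 (by omega) (per A u 0 1 (by omega) (by omega) hchain c₀ hc₀)
    by_cases d02 : dt (u 0) (u 2) = 0
    · obtain ⟨c₀, hc₀⟩ := dep hu0ne' d02
      exact hfin 0 (by omega) (per A u 0 2 (by omega) (by omega) hchain c₀ hc₀)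
    by_cases d12 : dt (u 1) (u 2) = 0
    · obtain ⟨c₀, hc₀⟩ := dep e1 d12
      exact hfin 1 (by omega) (per A u 1 2 (by omega) (by omega) hchain c₀ hc₀)
    by_cases d13 : dt (u 1) (u 3) = 0
    · obtain ⟨c₀, hc₀⟩ := dep e1 d13
      exact hfin 1 (by omega) (per A u 1 3 (by omega) (by omega) hchain c₀ hc₀)
    by_cases d23 : dt (u 2) (u 3) = 0
    · obtain ⟨c₀, hc₀⟩ := dep e2 d23
      exact hfin 2 (by omega) (per A u 2 3 (by omega) (by omega) hchain c₀ hc₀)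
    -- all relevant pairs independent
    rw [hU0, hU1] at d01
    rw [hU0, hU2] at d02
    rw [hU1, hU2] at d12
    rw [hU1, hU3] at d13
    rw [hU2, hU3] at d23
    have hnz : ¬ ∀ i, A i *ᵥ u0 = 0 := by
      intro hall
      apply e1
      rw [hU1]
      apply eq_zero_of_ov
      rw [← hu1]
      conv_lhs => rw [hu0]
      rw [Phi_ov Φ A hΦ]
      apply Finset.sum_eq_zero
      intro i _
      rw [hall i, ov_zero]
    obtain ⟨M, a', hM⟩ := allA A d01 d02 d12 d13 d23 hc0 hc1 hc2 hnz
    refine hfin 0 (by omega) ⟨fun j => (M ^ j) *ᵥ u 0, by simp, ?_⟩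
    intro j i
    refine ⟨a' i, ?_⟩
    show A i *ᵥ ((M ^ j) *ᵥ u 0) = a' i • ((M ^ (j + 1)) *ᵥ u 0)
    rw [hM i, smul_mulVec, mulVec_mulVec, ← pow_succ']
end

section
/- There exist finitely many matrices A_1, …, A_m ∈ M_2(ℂ) with Σ_{i=1}^m A_i* A_i = I (so that Φ(X) = Σ_{i=1}^m A_i X A_i* is a quantum channel) such that Φ^3 maps every nonzero positive semidefinite 2×2 matrix to a positive definite matrix, but Φ^2 does not (i.e., Φ is primitive with primitivity index equal to 3). -/
open Matrix
open scoped ComplexOrder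

noncomputable def myA : Fin 2 → Matrix (Fin 2) (Fin 2) ℂ :=
  ![!![0, 1; 0, 0], !![3/5, 0; 4/5, 0]]

lemma myA_sum : ∑ i, (myA i)ᴴ * myA i = 1 := by
  simp only [Fin.sum_univ_two, myA]
  ext i j
  fin_cases i <;> fin_cases j <;>
    simp [Matrix.mul_apply, Fin.sum_univ_two, Matrix.one_apply, Matrix.conjTranspose_apply] <;>
    norm_num [Complex.conj_ofNat]

noncomputable def myPhi : Module.End ℂ (Matrix (Fin 2) (Fin 2) ℂ) where
  toFun X := ∑ i, myA i * X * (myA i)ᴴ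
  map_add' X Y := by
    simp [Matrix.mul_add, Matrix.add_mul, Finset.sum_add_distrib]
  map_smul' c X := by
    simp [Matrix.mul_smul, Matrix.smul_mul, Finset.smul_sum]

lemma myPhi_apply (X : Matrix (Fin 2) (Fin 2) ℂ) :
    myPhi X = !![X 1 1 + 9/25 * X 0 0, 12/25 * X 0 0;
                 12/25 * X 0 0, 16/25 * X 0 0] := by
  show ∑ i, myA i * X * (myA i)ᴴ = _
  simp only [Fin.sum_univ_two, myA]
  ext i j
  fin_cases i <;> fin_cases j <;>
    (simp [Matrix.mul_apply, Matrix.vecMul, dotProduct, Fin.sum_univ_two, Matrix.conjTranspose_apply, Complex.conj_ofNat, Matrix.vecHead, Matrix.vecTail]; ring)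

lemma posdef_aux (p s : ℝ) (hp : 0 < p) (hs : 0 < s) :
    (!![(p : ℂ) + 9 * s, 12 * s; 12 * s, 16 * s]).PosDef := by
  rw [Matrix.posDef_iff_dotProduct_mulVec]
  constructor
  · ext i j
    fin_cases i <;> fin_cases j <;>
      simp [Matrix.conjTranspose_apply, Complex.conj_ofReal, Complex.conj_ofNat]
  · intro v hv
    have key : star v ⬝ᵥ (!![(p : ℂ) + 9 * s, 12 * s; 12 * s, 16 * s]) *ᵥ v
        = ((p * Complex.normSq (v 0) + s * Complex.normSq (3 * v 0 + 4 * v 1) : ℝ) : ℂ) := by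
      push_cast [Complex.normSq_eq_conj_mul_self]
      simp [dotProduct, Matrix.mulVec, Fin.sum_univ_two, Complex.conj_ofNat, Matrix.vecHead, Matrix.vecTail]
      ring
    rw [key, Complex.zero_lt_real]
    have hcase : v 0 ≠ 0 ∨ v 1 ≠ 0 := by
      by_contra hc
      push_neg at hc
      exact hv (funext fun i => by fin_cases i <;> simp [hc.1, hc.2])
    rcases hcase with h0 | h1
    · have : 0 < Complex.normSq (v 0) := Complex.normSq_pos.mpr h0
      nlinarith [Complex.normSq_nonneg (3 * v 0 + 4 * v 1)]
    · by_cases h0 : v 0 = 0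
      · have : 3 * v 0 + 4 * v 1 ≠ 0 := by simp [h0, h1]
        have := Complex.normSq_pos.mpr this
        nlinarith [Complex.normSq_nonneg (v 0)]
      · have : 0 < Complex.normSq (v 0) := Complex.normSq_pos.mpr h0
        nlinarith [Complex.normSq_nonneg (3 * v 0 + 4 * v 1)]

lemma diag_nonneg {X : Matrix (Fin 2) (Fin 2) ℂ} (hX : X.PosSemidef) (i : Fin 2) :
    0 ≤ X i i := by
  have := hX.dotProduct_mulVec_nonneg (Pi.single i 1)
  simpa [dotProduct, Matrix.mulVec, Fin.sum_univ_two, Pi.single_apply] using this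

lemma phi3_posdef {X : Matrix (Fin 2) (Fin 2) ℂ} (hX : X.PosSemidef) (hne : X ≠ 0) :
    ((myPhi ^ 3) X).PosDef := by
  set a : ℝ := (X 0 0).re with ha
  set d : ℝ := (X 1 1).re with hd
  have h00 := diag_nonneg hX 0
  have h11 := diag_nonneg hX 1
  rw [Complex.nonneg_iff] at h00 h11
  have hX00 : X 0 0 = (a : ℂ) := Complex.ext rfl h00.2.symm
  have hX11 : X 1 1 = (d : ℂ) := Complex.ext rfl h11.2.symm
  have hann : 0 ≤ a := h00.1
  have hdnn : 0 ≤ d := h11.1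
  -- a + d > 0, otherwise X = 0
  have hsum : 0 < a + d := by
    rcases lt_or_eq_of_le (by linarith : (0:ℝ) ≤ a + d) with h | h
    · exact h
    · exfalso
      have haz : a = 0 := by linarith
      have hdz : d = 0 := by linarith
      apply hne
      have hc0 : X *ᵥ Pi.single 0 1 = 0 := by
        rw [← hX.dotProduct_mulVec_zero_iff]
        simp [dotProduct, Matrix.mulVec, Fin.sum_univ_two, Pi.single_apply, hX00, haz]
      have hc1 : X *ᵥ Pi.single 1 1 = 0 := by
        rw [← hX.dotProduct_mulVec_zero_iff]
        simp [dotProduct, Matrix.mulVec, Fin.sum_univ_two, Pi.single_apply, hX11, hdz]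
      ext i j
      fin_cases j
      · have := congrFun hc0 i
        simpa [Matrix.mulVec, dotProduct, Fin.sum_univ_two, Pi.single_apply] using this
      · have := congrFun hc1 i
        simpa [Matrix.mulVec, dotProduct, Fin.sum_univ_two, Pi.single_apply] using this
  set p : ℝ := (144 * a + 400 * d) / 625 with hp
  set s : ℝ := (481 * a + 225 * d) / 15625 with hs
  have hppos : 0 < p := by rw [hp]; nlinarith
  have hspos : 0 < s := by rw [hs]; nlinarith
  have h3 : (myPhi ^ 3) X = !![(p : ℂ) + 9 * s, 12 * s; 12 * s, 16 * s] := by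
    have e : (myPhi ^ 3) X = myPhi (myPhi (myPhi X)) := rfl
    rw [e, myPhi_apply X, hX00, hX11, myPhi_apply, myPhi_apply]
    ext i j
    fin_cases i <;> fin_cases j <;> (simp [hp, hs]; push_cast; ring)
  rw [h3]
  exact posdef_aux p s hppos hspos

lemma phi2_not_posdef :
    ¬ (∀ X : Matrix (Fin 2) (Fin 2) ℂ, X.PosSemidef → X ≠ 0 → ((myPhi ^ 2) X).PosDef) := by
  intro h
  set X : Matrix (Fin 2) (Fin 2) ℂ := !![0, 0; 0, 1] with hXdef
  have hdiag : X = Matrix.diagonal ![0, 1] := by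
    ext i j
    fin_cases i <;> fin_cases j <;> simp [hXdef, Matrix.diagonal]
  have hpsd : X.PosSemidef := by
    rw [hdiag]
    exact Matrix.PosSemidef.diagonal (by intro i; fin_cases i <;> simp)
  have hne : X ≠ 0 := by
    intro h0
    have := congrFun (congrFun h0 1) 1
    simp [hXdef] at this
  have hpd := h X hpsd hne
  have h2 : (myPhi ^ 2) X = !![9/25, 12/25; 12/25, 16/25] := by
    have e : (myPhi ^ 2) X = myPhi (myPhi X) := rfl
    rw [e, myPhi_apply X, myPhi_apply]
    ext i j
    fin_cases i <;> fin_cases j <;> norm_num [hXdef]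
  rw [h2] at hpd
  have hv : (![4, -3] : Fin 2 → ℂ) ≠ 0 := by
    intro h0
    have := congrFun h0 0
    simp at this
  have := hpd.dotProduct_mulVec_pos hv
  have hz : (!![9/25, 12/25; 12/25, 16/25] : Matrix (Fin 2) (Fin 2) ℂ) *ᵥ ![4, -3] = 0 := by
    funext i
    fin_cases i <;> (simp [Matrix.mulVec, dotProduct, Fin.sum_univ_two]; norm_num)
  rw [hz] at this
  simp at this

/-- There is a quantum channel on `M_2(ℂ)`, i.e. a map
`Φ(X) = Σ_i A_i X A_i*` with `Σ_i A_i* A_i = 1`, which is primitive with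
primitivity index exactly `3`: `Φ^3` is strictly positive but `Φ^2` is not. -/
theorem exists_qubit_channel_index_eq_three :
    ∃ m : ℕ, ∃ A : Fin m → Matrix (Fin 2) (Fin 2) ℂ,
      (∑ i, (A i)ᴴ * A i = 1) ∧
      ∃ Φ : Module.End ℂ (Matrix (Fin 2) (Fin 2) ℂ),
        (∀ X : Matrix (Fin 2) (Fin 2) ℂ, Φ X = ∑ i, A i * X * (A i)ᴴ) ∧
        (∀ X : Matrix (Fin 2) (Fin 2) ℂ, X.PosSemidef → X ≠ 0 → ((Φ ^ 3) X).PosDef) ∧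
        ¬ (∀ X : Matrix (Fin 2) (Fin 2) ℂ, X.PosSemidef → X ≠ 0 → ((Φ ^ 2) X).PosDef) := by
  exact ⟨2, myA, myA_sum, myPhi, fun _ => rfl, fun _ hX hne => phi3_posdef hX hne,
    phi2_not_posdef⟩
end
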